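/- For every positive integer t, every sum-decreasing sequence of positive integers whose first term is t has length at most ⌊log₂ t⌋ + 1, and there exists a sum-decreasing sequence of positive integers with first term t whose length is exactly ⌊log₂ t⌋ + 1. -/

import Mathlib

open SimpleGraph

/-- `c'` is a one-step move of the `k` cops from configuration `c` in `G`:
each cop stays put or moves to an adjacent vertex. -/
def OneStepMove {V : Type*} (G : SimpleGraph V) {k : ℕ} (c c' : Fin k → V) : Prop :=
  ∀ i, c' i = c i ∨ G.Adj (c i) (c' i)

/-- The capture predicate `Cap G T s c r`: from cop configuration `c`, with the robber at `r`,
the cops can capture the robber within `s` time-steps, ending in a configuration in `T`. -/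
def Cap {V : Type*} (G : SimpleGraph V) {k : ℕ} (T : Set (Fin k → V)) :
    ℕ → (Fin k → V) → V → Prop
  | 0, _, _ => False
  | s + 1, c, r => ∃ c', OneStepMove G c c' ∧
      (((∃ i, c' i = r) ∧ c' ∈ T) ∨
        ∀ r', (r' = r ∨ G.Adj r r') →
          (((∃ i, c' i = r') ∧ c' ∈ T) ∨ Cap G T s c' r'))

/-- `k` cops can win a single play on `G` within `t` time-steps. -/
def TimedWin {V : Type*} (G : SimpleGraph V) (k t : ℕ) : Prop :=
  ∃ c : Fin k → V, ∀ r : V,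
    (∃ i, c i = r) ∨ Cap G (Set.univ : Set (Fin k → V)) t c r

/-- The `t`-capture cop number `c_t(G)`. -/
noncomputable def captureCopNumber {V : Type*} (G : SimpleGraph V) (t : ℕ) : ℕ :=
  sInf {k | 1 ≤ k ∧ TimedWin G k t}

/-- `k` cops can win the eternal game on `G`, capturing each robber within `t` time-steps. -/
def EternalWin {V : Type*} (G : SimpleGraph V) (k t : ℕ) : Prop :=
  ∃ T : Set (Fin k → V), T.Nonempty ∧
    ∀ c ∈ T, ∀ r : V, (∃ i, c i = r) ∨ Cap G T t c r

/-- The eternal cop number `c_t^∞(G)`. -/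
noncomputable def eternalCopNumber {V : Type*} (G : SimpleGraph V) (t : ℕ) : ℕ :=
  sInf {k | 1 ≤ k ∧ EternalWin G k t}

/-- The cop number `c(G)`. -/
noncomputable def copNumber {V : Type*} (G : SimpleGraph V) : ℕ :=
  sInf {k | ∃ t, 1 ≤ t ∧ captureCopNumber G t ≤ k}

/-- `ℓ_i = ⌈(1 - 2^{-i}) t - 1/2⌉`. -/
def ell (t i : ℕ) : ℕ :=
  (⌈((1 : ℚ) - 2 ^ (-(i : ℤ))) * (t : ℚ) - 1 / 2⌉).toNat

/-- The subgraph of `G` induced by `W` is a retract of `G`. -/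
def IsRetract {V : Type*} (G : SimpleGraph V) (W : Set V) : Prop :=
  ∃ f : V → V, (∀ v, f v ∈ W) ∧ (∀ w ∈ W, f w = w) ∧
    ∀ u v, G.Adj u v → f u = f v ∨ G.Adj (f u) (f v)

/-- The radius of a graph. -/
noncomputable def graphRadius {V : Type*} (G : SimpleGraph V) : ℕ :=
  sInf {r | ∃ v, ∀ u, G.dist v u ≤ r}

/-- A finite sequence is sum-decreasing if every term is strictly greater
than the sum of all terms that come after it. -/
def SumDecreasing (l : List ℕ) : Prop :=
  ∀ i : Fin l.length, (l.drop (i + 1)).sum < l.get i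


lemma sumDecreasing_cons {a : ℕ} {l : List ℕ} :
    SumDecreasing (a :: l) ↔ l.sum < a ∧ SumDecreasing l := by
  constructor
  · intro h
    refine ⟨?_, ?_⟩
    · have := h ⟨0, by simp⟩
      simpa using this
    · intro j
      have := h ⟨j + 1, by simpa using Nat.succ_lt_succ j.isLt⟩
      simpa using this
  · rintro ⟨h1, h2⟩ i
    rcases i with ⟨i, hi⟩
    cases i with
    | zero => simpa using h1
    | succ n =>
        have := h2 ⟨n, by simpa using Nat.lt_of_succ_lt_succ hi⟩
        simpa using this

lemma sumDecreasing_sum_ge {l : List ℕ} (hpos : ∀ x ∈ l, 0 < x)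
    (hsd : SumDecreasing l) : 2 ^ l.length - 1 ≤ l.sum := by
  induction l with
  | nil => simp
  | cons a l ih =>
      rw [sumDecreasing_cons] at hsd
      have h1 : 2 ^ l.length - 1 ≤ l.sum := ih (fun x hx => hpos x (by simp [hx])) hsd.2
      have ha : 2 ^ l.length ≤ a := by
        have := hsd.1
        have hp : 1 ≤ 2 ^ l.length := Nat.one_le_two_pow
        omega
      simp only [List.length_cons, List.sum_cons, pow_succ]
      have hp : 1 ≤ 2 ^ l.length := Nat.one_le_two_pow
      omega

/-- The witness sequence: `t, ⌊t/2⌋, ⌊t/4⌋, …, 1`. -/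
def halfSeq : ℕ → List ℕ
  | 0 => []
  | (n + 1) => (n + 1) :: halfSeq ((n + 1) / 2)
decreasing_by exact Nat.div_lt_self (Nat.succ_pos n) one_lt_two

lemma halfSeq_pos : ∀ t, ∀ x ∈ halfSeq t, 0 < x := by
  intro t
  induction t using Nat.strong_induction_on with
  | _ t ih =>
    match t with
    | 0 => simp [halfSeq]
    | (n + 1) =>
        intro x hx
        rw [halfSeq] at hx
        rcases List.mem_cons.mp hx with h | h
        · omega
        · exact ih ((n + 1) / 2) (Nat.div_lt_self (Nat.succ_pos n) one_lt_two) x h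

lemma halfSeq_sum : ∀ t, (halfSeq t).sum ≤ 2 * t - 1 := by
  intro t
  induction t using Nat.strong_induction_on with
  | _ t ih =>
    match t with
    | 0 => simp [halfSeq]
    | (n + 1) =>
        rw [halfSeq]
        have := ih ((n + 1) / 2) (Nat.div_lt_self (Nat.succ_pos n) one_lt_two)
        simp only [List.sum_cons]
        omega

lemma halfSeq_sd : ∀ t, SumDecreasing (halfSeq t) := by
  intro t
  induction t using Nat.strong_induction_on with
  | _ t ih =>
    match t with
    | 0 => intro i; exact absurd i.isLt (by simp [halfSeq])
    | (n + 1) =>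
        rw [halfSeq, sumDecreasing_cons]
        have hlt := Nat.div_lt_self (Nat.succ_pos n) one_lt_two
        refine ⟨?_, ih _ hlt⟩
        have := halfSeq_sum ((n + 1) / 2)
        omega

lemma halfSeq_len : ∀ t, 1 ≤ t → (halfSeq t).length = Nat.log 2 t + 1 := by
  intro t
  induction t using Nat.strong_induction_on with
  | _ t ih =>
    match t with
    | 0 => omega
    | 1 => intro _; simp [halfSeq]
    | (n + 2) =>
        intro _
        rw [halfSeq]
        have hlt := Nat.div_lt_self (Nat.succ_pos (n + 1)) one_lt_two
        have h2 : 1 ≤ (n + 2) / 2 := by omega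
        rw [List.length_cons, ih _ hlt h2]
        have hlog : Nat.log 2 ((n + 2) / 2) = Nat.log 2 (n + 2) - 1 := Nat.log_div_base 2 (n + 2)
        have h1 : 0 < Nat.log 2 (n + 2) := Nat.log_pos one_lt_two (by omega)
        have e : Nat.log 2 ((n + 1 + 1) / 2) = Nat.log 2 ((n + 2) / 2) := rfl
        simp only [Nat.succ_eq_add_one, e] at *
        omega

/-- the maximum length of a sum-decreasing sequence of positive integers
with first term `t` is exactly `⌊log₂ t⌋ + 1`. -/
theorem maxseq_eq_log_add_one (t : ℕ) (ht : 1 ≤ t) :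
    (∀ l : List ℕ, (∀ x ∈ l, 0 < x) → SumDecreasing l → l.head? = some t →
      l.length ≤ Nat.log 2 t + 1) ∧
    (∃ l : List ℕ, (∀ x ∈ l, 0 < x) ∧ SumDecreasing l ∧ l.head? = some t ∧
      l.length = Nat.log 2 t + 1) := by
  constructor
  · intro l hpos hsd hhead
    match l, hhead with
    | a :: l', hhead =>
      have ha : a = t := by simpa using hhead
      subst ha
      rw [sumDecreasing_cons] at hsd
      have h1 : 2 ^ l'.length - 1 ≤ l'.sum :=
        sumDecreasing_sum_ge (fun x hx => hpos x (by simp [hx])) hsd.2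
      have h2 : 2 ^ l'.length ≤ a := by
        have hp : 1 ≤ 2 ^ l'.length := Nat.one_le_two_pow
        have := hsd.1
        omega
      have hle : l'.length ≤ Nat.log 2 a :=
        (Nat.le_log_iff_pow_le one_lt_two (by omega)).mpr h2
      simp only [List.length_cons]
      omega
  · refine ⟨halfSeq t, halfSeq_pos t, halfSeq_sd t, ?_, halfSeq_len t ht⟩
    match t, ht with
    | (n + 1), _ => rw [halfSeq]; rfl
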